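/- Let F = (f_i)_{i∈I} be a frame for a complex Hilbert space H and let π : I → I be a bijection with the property that lim_{n→∞} |I_n ∩ π(I_n)| / |I_n| = 1. Then G = (g_i)_{i∈I} with g_i = f_{π(i)} is a frame for H and F ≈ G. -/

import Mathlib

open Filter Topology

noncomputable section

/-- A family `f : ι → H` is a frame for the complex Hilbert space `H`. -/
def IsFrame {ι : Type*} {H : Type*} [NormedAddCommGroup H] [InnerProductSpace ℂ H]
    (f : ι → H) : Prop :=
  ∃ A B : ℝ, 0 < A ∧ 0 < B ∧ ∀ h : H,
    A * ‖h‖ ^ 2 ≤ ∑' i, ‖(inner ℂ h (f i) : ℂ)‖ ^ 2 ∧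
    ∑' i, ‖(inner ℂ h (f i) : ℂ)‖ ^ 2 ≤ B * ‖h‖ ^ 2

/-- The frame operator `S h = ∑_i ⟨h, f i⟩ f i` (paper's first-linear convention). -/
def frameOp {ι : Type*} {H : Type*} [NormedAddCommGroup H] [InnerProductSpace ℂ H]
    (f : ι → H) (h : H) : H :=
  ∑' i, (inner ℂ (f i) h : ℂ) • f i

/-- `ftil` is the canonical dual frame of `f`: `S (ftil i) = f i`, i.e. `ftil i = S⁻¹ (f i)`. -/
def IsCanonicalDual {ι : Type*} {H : Type*} [NormedAddCommGroup H] [InnerProductSpace ℂ H]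
    (f ftil : ι → H) : Prop :=
  ∀ i, frameOp f (ftil i) = f i

/-- `b n = ∑_{i ∈ Iₙ} ⟨f i, f̃ i⟩` (a real number; we take the real part). -/
def bSeq {ι : Type*} {H : Type*} [NormedAddCommGroup H] [InnerProductSpace ℂ H]
    (In : ℕ → Finset ι) (f ftil : ι → H) (n : ℕ) : ℝ :=
  (∑ i ∈ In n, (inner ℂ (f i) (ftil i) : ℂ)).re

/-- `x ≈ y` : `(xₙ − yₙ)/|Iₙ| → 0`. -/
def SeqApprox {ι : Type*} (In : ℕ → Finset ι) (x y : ℕ → ℝ) : Prop :=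
  Tendsto (fun n => (x n - y n) / ((In n).card : ℝ)) atTop (nhds 0)


section Aux

variable {ι : Type*} {H : Type*} [NormedAddCommGroup H] [InnerProductSpace ℂ H]

lemma aux_coefSummable (f : ι → H) (A : ℝ) (hA : 0 < A)
    (hlow : ∀ h : H, A * ‖h‖ ^ 2 ≤ ∑' i, ‖(inner ℂ h (f i) : ℂ)‖ ^ 2) (h : H) :
    Summable (fun i => ‖(inner ℂ h (f i) : ℂ)‖ ^ 2) := by
  by_cases hz : h = 0
  · subst hz
    by_contra hs
    have := hlow 0
    rw [tsum_eq_zero_of_not_summable hs] at this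
    simp at this
    exact hs (by simpa [this] using summable_zero)
  · by_contra hs
    have := hlow h
    rw [tsum_eq_zero_of_not_summable hs] at this
    have hn : 0 < ‖h‖ := norm_pos_iff.mpr hz
    nlinarith [mul_pos hA (pow_pos hn 2)]

lemma aux_finEst (f : ι → H) (B : ℝ) (hB : 0 < B)
    (hup : ∀ h : H, ∑' i, ‖(inner ℂ h (f i) : ℂ)‖ ^ 2 ≤ B * ‖h‖ ^ 2)
    (hsum : ∀ h : H, Summable (fun i => ‖(inner ℂ h (f i) : ℂ)‖ ^ 2))
    (t : Finset ι) (c : ι → ℂ) :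
    ‖∑ i ∈ t, c i • f i‖ ^ 2 ≤ B * ∑ i ∈ t, ‖c i‖ ^ 2 := by
  set x := ∑ i ∈ t, c i • f i with hx
  have h1 : (inner ℂ x x : ℂ) = ∑ i ∈ t, (starRingEnd ℂ) (c i) * inner ℂ (f i) x := by
    rw [hx, sum_inner]
    exact Finset.sum_congr rfl fun i _ => inner_smul_left _ _ _
  have h2 : ‖x‖ ^ 2 ≤ ∑ i ∈ t, ‖c i‖ * ‖(inner ℂ x (f i) : ℂ)‖ := by
    calc ‖x‖ ^ 2 = ‖(inner ℂ x x : ℂ)‖ := by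
          rw [@inner_self_eq_norm_sq_to_K ℂ]; simp [sq_abs]
      _ ≤ ∑ i ∈ t, ‖(starRingEnd ℂ) (c i) * inner ℂ (f i) x‖ := h1 ▸ norm_sum_le _ _
      _ = ∑ i ∈ t, ‖c i‖ * ‖(inner ℂ x (f i) : ℂ)‖ := by
          refine Finset.sum_congr rfl fun i _ => ?_
          rw [norm_mul, RingHomIsometric.norm_map, ← norm_inner_symm]
  have h3 : (∑ i ∈ t, ‖c i‖ * ‖(inner ℂ x (f i) : ℂ)‖) ^ 2 ≤
      (∑ i ∈ t, ‖c i‖ ^ 2) * ∑ i ∈ t, ‖(inner ℂ x (f i) : ℂ)‖ ^ 2 :=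
    Finset.sum_mul_sq_le_sq_mul_sq t _ _
  have h4 : ∑ i ∈ t, ‖(inner ℂ x (f i) : ℂ)‖ ^ 2 ≤ B * ‖x‖ ^ 2 :=
    le_trans ((hsum x).sum_le_tsum t (fun i _ => sq_nonneg _)) (hup x)
  have hc : 0 ≤ ∑ i ∈ t, ‖c i‖ ^ 2 := Finset.sum_nonneg fun i _ => sq_nonneg _
  by_cases hx0 : ‖x‖ = 0
  · rw [hx0]; nlinarith
  · have hxp : 0 < ‖x‖ := lt_of_le_of_ne (norm_nonneg _) (Ne.symm hx0)
    have hS : 0 ≤ ∑ i ∈ t, ‖c i‖ * ‖(inner ℂ x (f i) : ℂ)‖ := le_trans (sq_nonneg _) h2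
    have h5 : ‖x‖ ^ 2 * ‖x‖ ^ 2 ≤ (∑ i ∈ t, ‖c i‖ ^ 2) * (B * ‖x‖ ^ 2) := by nlinarith
    have hx2 : 0 < ‖x‖ ^ 2 := pow_pos hxp 2
    nlinarith

variable [CompleteSpace H]

lemma aux_vecSummable (f : ι → H) (B : ℝ) (hB : 0 < B)
    (hest : ∀ (t : Finset ι) (c : ι → ℂ), ‖∑ i ∈ t, c i • f i‖ ^ 2 ≤ B * ∑ i ∈ t, ‖c i‖ ^ 2)
    (h : H) (hsum : Summable (fun i => ‖(inner ℂ h (f i) : ℂ)‖ ^ 2)) :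
    Summable (fun i => (inner ℂ (f i) h : ℂ) • f i) := by
  rw [summable_iff_vanishing]
  intro e he
  obtain ⟨ε, hε, hball⟩ := Metric.mem_nhds_iff.mp he
  have hδ : (0:ℝ) < ε ^ 2 / B := by positivity
  obtain ⟨s, hs⟩ := (summable_iff_vanishing.mp hsum) (Metric.ball 0 (ε ^ 2 / B))
    (Metric.ball_mem_nhds _ hδ)
  refine ⟨s, fun t ht => ?_⟩
  apply hball
  simp only [Metric.mem_ball, dist_zero_right]
  have h1 := hest t (fun i => (inner ℂ (f i) h : ℂ))
  have h2 := hs t ht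
  simp only [Metric.mem_ball, dist_zero_right, Real.norm_eq_abs] at h2
  have h2' : ∑ i ∈ t, ‖(inner ℂ (f i) h : ℂ)‖ ^ 2 < ε ^ 2 / B := by
    have : ∑ i ∈ t, ‖(inner ℂ h (f i) : ℂ)‖ ^ 2 < ε ^ 2 / B :=
      lt_of_le_of_lt (le_abs_self _) h2
    simpa [norm_inner_symm] using this
  have h3 : ‖∑ i ∈ t, (inner ℂ (f i) h : ℂ) • f i‖ ^ 2 < ε ^ 2 := by
    calc ‖∑ i ∈ t, (inner ℂ (f i) h : ℂ) • f i‖ ^ 2 ≤ B * ∑ i ∈ t, ‖(inner ℂ (f i) h : ℂ)‖ ^ 2 := h1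
      _ < B * (ε ^ 2 / B) := mul_lt_mul_of_pos_left h2' hB
      _ = ε ^ 2 := by field_simp
  nlinarith [norm_nonneg (∑ i ∈ t, (inner ℂ (f i) h : ℂ) • f i)]

lemma aux_innerFrameOp (f : ι → H) (h : H)
    (hvsum : Summable fun i => (inner ℂ (f i) h : ℂ) • f i) :
    (inner ℂ h (frameOp f h) : ℂ) = ((∑' i, ‖(inner ℂ h (f i) : ℂ)‖ ^ 2 : ℝ) : ℂ) := by
  have h1 : (inner ℂ h (frameOp f h) : ℂ) = ∑' i, (inner ℂ h ((inner ℂ (f i) h : ℂ) • f i) : ℂ) := by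
    rw [frameOp]
    exact (innerSL ℂ h).map_tsum hvsum
  rw [h1]
  have h2 : ∀ i, (inner ℂ h ((inner ℂ (f i) h : ℂ) • f i) : ℂ)
      = ((‖(inner ℂ h (f i) : ℂ)‖ ^ 2 : ℝ) : ℂ) := by
    intro i
    rw [inner_smul_right, ← inner_conj_symm h (f i), RCLike.mul_conj]
    rw [RCLike.norm_conj]; norm_cast
  rw [tsum_congr h2, ← Complex.ofReal_tsum]

end Aux

/-- If `π : I → I` is a bijection with `|Iₙ ∩ π(Iₙ)|/|Iₙ| → 1`, then
`G = (f_{π i})` is a frame for `H` and `F ≈ G`. -/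
theorem stmt3 {ι : Type*} [Countable ι] [Infinite ι]
    {H : Type*} [NormedAddCommGroup H] [InnerProductSpace ℂ H] [CompleteSpace H]
    (In : ℕ → Finset ι) (hmono : Monotone In) (hcover : ∀ i : ι, ∃ n, i ∈ In n)
    (f ftil : ι → H) (hf : IsFrame f) (hdual : IsCanonicalDual f ftil)
    (π : Equiv.Perm ι)
    (hπ : Tendsto
      (fun n => (((In n : Set ι) ∩ (π '' (In n : Set ι))).ncard : ℝ) / ((In n).card : ℝ))
      atTop (nhds 1)) :
    IsFrame (fun i => f (π i)) ∧
    ∀ gtil : ι → H, IsCanonicalDual (fun i => f (π i)) gtil →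
      SeqApprox In (bSeq In f ftil) (bSeq In (fun i => f (π i)) gtil) := by
  classical
  obtain ⟨A, B, hA, hB, hfr⟩ := hf
  have hsum : ∀ h : H, Summable (fun i => ‖(inner ℂ h (f i) : ℂ)‖ ^ 2) :=
    aux_coefSummable f A hA (fun h => (hfr h).1)
  have hest := aux_finEst f B hB (fun h => (hfr h).2) hsum
  have hvsum : ∀ h : H, Summable (fun i => (inner ℂ (f i) h : ℂ) • f i) :=
    fun h => aux_vecSummable f B hB hest h (hsum h)
  have hinner : ∀ h : H,
      (inner ℂ h (frameOp f h) : ℂ) = ((∑' i, ‖(inner ℂ h (f i) : ℂ)‖ ^ 2 : ℝ) : ℂ) :=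
    fun h => aux_innerFrameOp f h (hvsum h)
  -- injectivity of the frame operator
  have hinj : ∀ x y : H, frameOp f x = frameOp f y → x = y := by
    intro x y hxy
    by_contra hne
    have hz : frameOp f (x - y) = 0 := by
      have hlin : frameOp f (x - y) = frameOp f x - frameOp f y := by
        rw [frameOp, frameOp, frameOp, ← (hvsum x).tsum_sub (hvsum y)]
        congr 1; funext i
        rw [inner_sub_right, sub_smul]
      rw [hlin, hxy, sub_self]
    have h2 := hinner (x - y)
    rw [hz, inner_zero_right] at h2
    have h3 : (∑' i, ‖(inner ℂ (x - y) (f i) : ℂ)‖ ^ 2 : ℝ) = 0 := by exact_mod_cast h2.symm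
    have h1 := (hfr (x - y)).1
    rw [h3] at h1
    have hn : 0 < ‖x - y‖ := norm_pos_iff.mpr (sub_ne_zero.mpr hne)
    nlinarith [mul_pos hA (pow_pos hn 2)]
  -- per-term bound
  have tb : ∀ j : ι, 0 ≤ (inner ℂ (f j) (ftil j) : ℂ).re ∧ (inner ℂ (f j) (ftil j) : ℂ).re ≤ 1 := by
    intro j
    set T : ℝ := ∑' i, ‖(inner ℂ (ftil j) (f i) : ℂ)‖ ^ 2 with hT
    have hc : (inner ℂ (ftil j) (f j) : ℂ) = (T : ℂ) := by
      rw [← hdual j]; exact hinner (ftil j)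
    have hT0 : 0 ≤ T := tsum_nonneg fun i => sq_nonneg _
    have hterm : ‖(inner ℂ (ftil j) (f j) : ℂ)‖ ^ 2 ≤ T :=
      (hsum (ftil j)).le_tsum j (fun _ _ => sq_nonneg _)
    rw [hc] at hterm
    have hnorm : ‖(T : ℂ)‖ = T := by
      rw [Complex.norm_real, Real.norm_eq_abs, abs_of_nonneg hT0]
    rw [hnorm] at hterm
    have hT1 : T ≤ 1 := by nlinarith
    have hre : (inner ℂ (f j) (ftil j) : ℂ) = (T : ℂ) := by
      rw [← inner_conj_symm, hc]; simp
    rw [hre]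
    simpa using ⟨hT0, hT1⟩
  constructor
  · refine ⟨A, B, hA, hB, fun h => ?_⟩
    have e : ∑' i, ‖(inner ℂ h (f (π i)) : ℂ)‖ ^ 2 = ∑' i, ‖(inner ℂ h (f i) : ℂ)‖ ^ 2 :=
      π.tsum_eq (fun i => ‖(inner ℂ h (f i) : ℂ)‖ ^ 2)
    rw [e]; exact hfr h
  · intro gtil hg
    have hOp : ∀ h : H, frameOp (fun i => f (π i)) h = frameOp f h := by
      intro h
      rw [frameOp, frameOp]
      exact π.tsum_eq (fun j => (inner ℂ (f j) h : ℂ) • f j)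
    have hgf : ∀ i, gtil i = ftil (π i) := by
      intro i
      refine hinj _ _ ?_
      rw [← hOp (gtil i), hg i, hdual (π i)]
    -- rewrite bSeq of G
    set t : ι → ℝ := fun j => (inner ℂ (f j) (ftil j) : ℂ).re with ht
    have hbF : ∀ n, bSeq In f ftil n = ∑ j ∈ In n, t j := by
      intro n; rw [bSeq, Complex.re_sum]
    have hbG : ∀ n, bSeq In (fun i => f (π i)) gtil n = ∑ j ∈ (In n).image π, t j := by
      intro n
      rw [bSeq, Complex.re_sum, Finset.sum_image (fun a _ b _ h => π.injective h)]
      exact Finset.sum_congr rfl fun i _ => by rw [hgf i]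
    -- cardinality bookkeeping
    have hcard : ∀ n, (((In n : Set ι) ∩ (π '' (In n : Set ι))).ncard : ℝ)
        = (((In n) ∩ (In n).image π).card : ℝ) := by
      intro n
      congr 1
      rw [show ((In n : Set ι) ∩ (π '' (In n : Set ι))) = (((In n) ∩ (In n).image π : Finset ι) : Set ι) by
        simp [Finset.coe_inter, Finset.coe_image]]
      exact Set.ncard_coe_finset _
    -- main estimate
    have key : ∀ n, |bSeq In f ftil n - bSeq In (fun i => f (π i)) gtil n|
        ≤ (In n).card - (((In n) ∩ (In n).image π).card : ℝ) := by
      intro n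
      rw [hbF, hbG]
      set s := In n with hs
      set s' := s.image π with hs'
      have decomp : ∀ u v : Finset ι, ∑ j ∈ u, t j = ∑ j ∈ u \ v, t j + ∑ j ∈ u ∩ v, t j := by
        intro u v
        rw [← Finset.sum_union (Finset.disjoint_sdiff_inter u v), Finset.sdiff_union_inter]
      have hsub : ∑ j ∈ s, t j - ∑ j ∈ s', t j = ∑ j ∈ s \ s', t j - ∑ j ∈ s' \ s, t j := by
        rw [decomp s s', decomp s' s, Finset.inter_comm s' s]
        ring
      have tnn : ∀ (u : Finset ι), 0 ≤ ∑ j ∈ u, t j :=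
        fun u => Finset.sum_nonneg fun j _ => (tb j).1
      have tle : ∀ (u : Finset ι), ∑ j ∈ u, t j ≤ (u.card : ℝ) := by
        intro u
        calc ∑ j ∈ u, t j ≤ ∑ j ∈ u, (1:ℝ) := Finset.sum_le_sum fun j _ => (tb j).2
          _ = u.card := by simp
      have hc1 : ((s \ s').card : ℝ) = (s.card : ℝ) - ((s ∩ s').card : ℝ) := by
        have := Finset.card_sdiff_add_card_inter s s'
        push_cast [← this]; ring
      have hc2 : ((s' \ s).card : ℝ) = (s.card : ℝ) - ((s ∩ s').card : ℝ) := by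
        have h1 := Finset.card_sdiff_add_card_inter s' s
        have h2 : s'.card = s.card := Finset.card_image_of_injective s π.injective
        rw [Finset.inter_comm s' s] at h1
        have h3 : ((s' \ s).card : ℝ) + ((s ∩ s').card : ℝ) = (s'.card : ℝ) := by
          exact_mod_cast h1
        have h4 : (s'.card : ℝ) = (s.card : ℝ) := by exact_mod_cast h2
        linarith
      rw [hsub, abs_sub_le_iff]
      constructor
      · calc ∑ j ∈ s \ s', t j - ∑ j ∈ s' \ s, t j ≤ ∑ j ∈ s \ s', t j := by
              linarith [tnn (s' \ s)]
          _ ≤ ((s \ s').card : ℝ) := tle _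
          _ = (s.card : ℝ) - ((s ∩ s').card : ℝ) := hc1
      · calc ∑ j ∈ s' \ s, t j - ∑ j ∈ s \ s', t j ≤ ∑ j ∈ s' \ s, t j := by
              linarith [tnn (s \ s')]
          _ ≤ ((s' \ s).card : ℝ) := tle _
          _ = (s.card : ℝ) - ((s ∩ s').card : ℝ) := hc2
    -- squeeze
    rw [SeqApprox]
    have hg0 : Tendsto (fun n => 1 - (((In n : Set ι) ∩ (π '' (In n : Set ι))).ncard : ℝ)
        / ((In n).card : ℝ)) atTop (nhds 0) := by
      have hone : Tendsto (fun _ : ℕ => (1:ℝ)) atTop (nhds 1) := tendsto_const_nhds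
      simpa using hone.sub hπ
    refine squeeze_zero_norm (fun n => ?_) hg0
    rw [Real.norm_eq_abs, abs_div]
    rcases eq_or_ne ((In n).card : ℝ) 0 with hc0 | hc0
    · simp only [hc0, abs_zero, div_zero, sub_zero]
      norm_num
    · have hcp : (0:ℝ) < ((In n).card : ℝ) :=
        lt_of_le_of_ne (Nat.cast_nonneg _) (Ne.symm hc0)
      rw [abs_of_pos hcp, div_le_iff₀ hcp]
      have hle : (((In n) ∩ (In n).image π).card : ℝ) ≤ ((In n).card : ℝ) := by
        exact_mod_cast Finset.card_le_card (Finset.inter_subset_left)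
      calc |bSeq In f ftil n - bSeq In (fun i => f (π i)) gtil n|
          ≤ (In n).card - (((In n) ∩ (In n).image π).card : ℝ) := key n
        _ = (1 - (((In n : Set ι) ∩ (π '' (In n : Set ι))).ncard : ℝ) / ((In n).card : ℝ))
            * ((In n).card : ℝ) := by
            rw [hcard]; field_simp

end
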